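/- There exists an absolute constant c > 0 such that for all β with 0 < β < 1/3, all μ with 0 < μ ≤ 1 and all ξ ∈ ℝ, one has K_μ(ξ) ≥ β + c·β·√μ·|ξ|. -/
import Mathlib


/-- The symbol `T_μ(ξ) = tanh(√μ |ξ|)/(√μ |ξ|)`, with value `1` at `ξ = 0`. -/
noncomputable def Tmu (μ ξ : ℝ) : ℝ :=
  if ξ = 0 then 1 else Real.tanh (Real.sqrt μ * |ξ|) / (Real.sqrt μ * |ξ|)

/-- The full-dispersion symbol `K_μ(ξ) = T_μ(ξ)·(1 + β μ ξ²)`. -/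
noncomputable def Kmu (β μ ξ : ℝ) : ℝ := Tmu μ ξ * (1 + β * μ * ξ ^ 2)

lemma tanh_lb (x : ℝ) (hx : 0 ≤ x) : x ≤ (1 + x) * Real.tanh x := by
  have hexp := Real.add_one_le_exp (2 * x)
  have ht : (0:ℝ) < Real.exp x := Real.exp_pos x
  have h2 : Real.exp (2 * x) = Real.exp x * Real.exp x := by
    rw [two_mul, Real.exp_add]
  have hinv : Real.exp (-x) = (Real.exp x)⁻¹ := Real.exp_neg x
  have hc : (0:ℝ) < Real.cosh x := Real.cosh_pos x
  rw [Real.tanh_eq_sinh_div_cosh, ← mul_div_assoc, le_div_iff₀ hc,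
    Real.sinh_eq, Real.cosh_eq, hinv]
  have hmul : Real.exp x * (Real.exp x)⁻¹ = 1 := mul_inv_cancel₀ (ne_of_gt ht)
  nlinarith [mul_pos ht (inv_pos.mpr ht), inv_pos.mpr ht]

theorem Kmu_lower_bound_small_beta :
    ∃ c > 0, ∀ β : ℝ, 0 < β → β < 1/3 → ∀ μ : ℝ, 0 < μ → μ ≤ 1 → ∀ ξ : ℝ,
      β + c * β * Real.sqrt μ * |ξ| ≤ Kmu β μ ξ := by
  refine ⟨1/3, by norm_num, fun β hβ hβ3 μ hμ hμ1 ξ => ?_⟩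
  by_cases hξ : ξ = 0
  · simp [hξ, Kmu, Tmu]
    linarith
  · set x := Real.sqrt μ * |ξ| with hxdef
    have hx : 0 < x := mul_pos (Real.sqrt_pos.mpr hμ) (abs_pos.mpr hξ)
    have hx2 : μ * ξ ^ 2 = x ^ 2 := by
      rw [hxdef, mul_pow, Real.sq_sqrt hμ.le, sq_abs]
    have htanh := tanh_lb x hx.le
    have h1x : (0:ℝ) < 1 + x := by linarith
    have hKmu : Kmu β μ ξ = Real.tanh x / x * (1 + β * x ^ 2) := by
      rw [Kmu, Tmu, if_neg hξ, mul_assoc β, hx2]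
    rw [hKmu]
    have hstep : (1 + β * x ^ 2) / (1 + x) ≤ Real.tanh x / x * (1 + β * x ^ 2) := by
      have hpos : (0:ℝ) < 1 + β * x ^ 2 := by positivity
      have h : 1 / (1 + x) ≤ Real.tanh x / x := by
        rw [div_le_div_iff₀ h1x hx]
        nlinarith
      calc (1 + β * x ^ 2) / (1 + x) = 1 / (1 + x) * (1 + β * x ^ 2) := by ring
        _ ≤ Real.tanh x / x * (1 + β * x ^ 2) := by
            exact mul_le_mul_of_nonneg_right h hpos.le
    refine le_trans ?_ hstep
    rw [le_div_iff₀ h1x]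
    have hxx : 1/3 * β * Real.sqrt μ * |ξ| = 1/3 * β * x := by rw [hxdef]; ring
    rw [hxx]
    nlinarith [sq_nonneg (x - 1), mul_pos hβ hx, mul_nonneg hβ.le (sq_nonneg (x-1))]
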